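/- Let κ ≥ 0 and λ = (λ1, λ2) ∈ ℝ² with 1 − κ λ2 ≠ 0, and let y : [0,1] → ℝ be four times continuously differentiable with y(0) = 0 and y'(0) = 0. Then L²(λ)y(t) = 0 for all t ∈ [0,1] if and only if the following three conditions hold: L⁴(λ)y(t) = 0 for all t ∈ [0,1], y''(1)(1−κλ2) + κλ1 y(1) = 0, and y'''(1)(1−κλ2) + (κλ1+λ2) y'(1) = 0. That is, the second-order integro-differential linearized boundary-value problem and the fourth-order linearized boundary-value problem are equivalent. -/

import Mathlib

open Set

/-- `I₁ z (t) = ∫_t^1 z(τ) dτ`. -/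
noncomputable def I1 (z : ℝ → ℝ) (t : ℝ) : ℝ := ∫ τ in t..(1:ℝ), z τ

/-- `I₂ z (t) = ∫_t^1 ∫_τ^1 z(η) dη dτ`. -/
noncomputable def I2 (z : ℝ → ℝ) (t : ℝ) : ℝ :=
  ∫ τ in t..(1:ℝ), ∫ η in τ..(1:ℝ), z η

/-- The linearized second-order integro-differential operator `L²(λ)`. -/
noncomputable def L2 (κ l1 l2 : ℝ) (y : ℝ → ℝ) (t : ℝ) : ℝ :=
  deriv (deriv y) t - l1 / (1 - κ * l2) * (I2 y t - κ * y t)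
    - l2 / (1 - κ * l2) * I1 (deriv y) t

/-- The linearized fourth-order differential operator `L⁴(λ)`. -/
noncomputable def L4 (κ l1 l2 : ℝ) (y : ℝ → ℝ) (t : ℝ) : ℝ :=
  deriv (deriv (deriv (deriv y))) t
    + (κ * l1 + l2) / (1 - κ * l2) * deriv (deriv y) t
    - l1 / (1 - κ * l2) * y t

lemma I1_hasDerivAt {z : ℝ → ℝ} (hz : Continuous z) (t : ℝ) :
    HasDerivAt (I1 z) (-z t) t :=
  (intervalIntegral.integral_hasStrictDerivAt_left
    (hz.intervalIntegrable t 1)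
    (hz.stronglyMeasurable.stronglyMeasurableAtFilter)
    hz.continuousAt).hasDerivAt

lemma I1_continuous {z : ℝ → ℝ} (hz : Continuous z) : Continuous (I1 z) :=
  continuous_iff_continuousAt.mpr fun t =>
    (I1_hasDerivAt hz t).differentiableAt.continuousAt

lemma I2_eq (z : ℝ → ℝ) : I2 z = I1 (I1 z) := rfl

lemma I1_at_one (z : ℝ → ℝ) : I1 z 1 = 0 := intervalIntegral.integral_same

lemma contdiff_step {f : ℝ → ℝ} {n : ℕ} (h : ContDiff ℝ (n+1 : ℕ) f) :
    ContDiff ℝ (n : ℕ) (deriv f) := by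
  have h' : ContDiff ℝ ((n : ℕ∞) + 1) f := by exact_mod_cast h
  exact_mod_cast (contDiff_succ_iff_deriv.mp h').2.2

/-- equivalence of the second-order integro-differential linearized
boundary value problem and the fourth-order linearized boundary value problem. -/
theorem stmt7 (κ l1 l2 : ℝ) (hκ : 0 ≤ κ) (hden : 1 - κ * l2 ≠ 0)
    (y : ℝ → ℝ) (hy : ContDiff ℝ 4 y)
    (h0 : y 0 = 0) (h0' : deriv y 0 = 0) :
    (∀ t ∈ Icc (0:ℝ) 1, L2 κ l1 l2 y t = 0) ↔
      ((∀ t ∈ Icc (0:ℝ) 1, L4 κ l1 l2 y t = 0) ∧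
        deriv (deriv y) 1 * (1 - κ * l2) + κ * l1 * y 1 = 0 ∧
        deriv (deriv (deriv y)) 1 * (1 - κ * l2) + (κ * l1 + l2) * deriv y 1 = 0) := by
  set a := l1 / (1 - κ * l2) with ha
  set b := l2 / (1 - κ * l2) with hb
  -- smoothness of derivatives
  have hy4 : ContDiff ℝ (4 : ℕ) y := by exact_mod_cast hy
  have hy3 : ContDiff ℝ (3 : ℕ) (deriv y) := contdiff_step hy4
  have hy2 : ContDiff ℝ (2 : ℕ) (deriv (deriv y)) := contdiff_step hy3
  have hy1 : ContDiff ℝ (1 : ℕ) (deriv (deriv (deriv y))) := contdiff_step hy2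
  have hy0 : ContDiff ℝ (0 : ℕ) (deriv (deriv (deriv (deriv y)))) := contdiff_step hy1
  have hc0 : Continuous y := hy4.continuous
  have hc1 : Continuous (deriv y) := hy3.continuous
  have hc2 : Continuous (deriv (deriv y)) := hy2.continuous
  have hc3 : Continuous (deriv (deriv (deriv y))) := hy1.continuous
  have hc4 : Continuous (deriv (deriv (deriv (deriv y)))) := hy0.continuous
  have hd0 : Differentiable ℝ y := hy4.differentiable (by norm_num)
  have hd1 : Differentiable ℝ (deriv y) := hy3.differentiable (by norm_num)
  have hd2 : Differentiable ℝ (deriv (deriv y)) := hy2.differentiable (by norm_num)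
  have hd3 : Differentiable ℝ (deriv (deriv (deriv y))) := hy1.differentiable (by norm_num)
  set F : ℝ → ℝ := L2 κ l1 l2 y with hF
  set G : ℝ → ℝ := fun t =>
    deriv (deriv (deriv y)) t + a * (I1 y t + κ * deriv y t) + b * deriv y t with hG
  -- F' = G
  have hFG : ∀ t, HasDerivAt F (G t) t := by
    intro t
    have h1 : HasDerivAt (fun t => I2 y t - κ * y t) (-(I1 y t) - κ * deriv y t) t := by
      rw [I2_eq]
      exact (I1_hasDerivAt (I1_continuous hc0) t).sub
        (((hd0 t).hasDerivAt).const_mul κ)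
    have h2 : HasDerivAt F
        (deriv (deriv (deriv y)) t - a * (-(I1 y t) - κ * deriv y t)
          - b * (-(deriv y t))) t := by
      exact (((hd2 t).hasDerivAt).sub (h1.const_mul a)).sub
        ((I1_hasDerivAt hc1 t).const_mul b)
    convert h2 using 1
    simp [hG]; ring
  -- G' = L4
  have hGL : ∀ t, HasDerivAt G (L4 κ l1 l2 y t) t := by
    intro t
    have h1 : HasDerivAt G
        (deriv (deriv (deriv (deriv y))) t
          + a * (-(y t) + κ * deriv (deriv y) t) + b * deriv (deriv y) t) t := by
      exact (((hd3 t).hasDerivAt).add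
        (((I1_hasDerivAt hc0 t).add (((hd1 t).hasDerivAt).const_mul κ)).const_mul a)).add
        (((hd1 t).hasDerivAt).const_mul b)
    convert h1 using 1
    simp only [L4, ← ha, ← hb]
    have : (κ * l1 + l2) / (1 - κ * l2) = a * κ + b := by
      rw [ha, hb]; field_simp
    rw [this]; ring
  have hFcont : Continuous F := continuous_iff_continuousAt.mpr fun t =>
    (hFG t).differentiableAt.continuousAt
  have hGcont : Continuous G := continuous_iff_continuousAt.mpr fun t =>
    (hGL t).differentiableAt.continuousAt
  -- values at 1
  have hF1 : F 1 = deriv (deriv y) 1 + a * κ * y 1 := by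
    simp [hF, L2, I2_eq, I1_at_one, ← ha, ← hb]; ring
  have hG1 : G 1 = deriv (deriv (deriv y)) 1 + (a * κ + b) * deriv y 1 := by
    simp [hG, I1_at_one]; ring
  have hBC1 : (deriv (deriv y) 1 * (1 - κ * l2) + κ * l1 * y 1 = 0) ↔ F 1 = 0 := by
    rw [hF1, ha]
    constructor
    · intro h; field_simp; linarith
    · intro h; field_simp at h; linarith
  have hBC2 : (deriv (deriv (deriv y)) 1 * (1 - κ * l2) + (κ * l1 + l2) * deriv y 1 = 0)
      ↔ G 1 = 0 := by
    rw [hG1, ha, hb]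
    constructor
    · intro h; field_simp; linarith
    · intro h; field_simp at h; linarith
  constructor
  · -- forward
    intro hL2
    have hFicc : ∀ t ∈ Icc (0:ℝ) 1, F t = 0 := hL2
    -- G = 0 on Ioo, then on Icc by continuity
    have hGIoo : EqOn G (fun _ => 0) (Ioo (0:ℝ) 1) := by
      intro t ht
      have hmem : Icc (0:ℝ) 1 ∈ nhds t := mem_nhds_iff.mpr ⟨Ioo 0 1, Ioo_subset_Icc_self, isOpen_Ioo, ht⟩
      have heq : F =ᶠ[nhds t] (fun _ => 0) := by
        filter_upwards [hmem] with x hx using hFicc x hx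
      have : HasDerivAt (fun _ : ℝ => (0:ℝ)) (G t) t := (hFG t).congr_of_eventuallyEq heq.symm
      have := this.unique (hasDerivAt_const t 0)
      simpa using this
    have hGIcc : EqOn G (fun _ => 0) (Icc (0:ℝ) 1) := by
      have := hGIoo.closure hGcont continuous_const
      rwa [closure_Ioo (by norm_num : (0:ℝ) ≠ 1)] at this
    have hLIoo : EqOn (L4 κ l1 l2 y) (fun _ => 0) (Ioo (0:ℝ) 1) := by
      intro t ht
      have hmem : Icc (0:ℝ) 1 ∈ nhds t := mem_nhds_iff.mpr ⟨Ioo 0 1, Ioo_subset_Icc_self, isOpen_Ioo, ht⟩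
      have heq : G =ᶠ[nhds t] (fun _ => 0) := by
        filter_upwards [hmem] with x hx using hGIcc hx
      have : HasDerivAt (fun _ : ℝ => (0:ℝ)) (L4 κ l1 l2 y t) t :=
        (hGL t).congr_of_eventuallyEq heq.symm
      have := this.unique (hasDerivAt_const t 0)
      simpa using this
    have hLcont : Continuous (L4 κ l1 l2 y) := by
      unfold L4
      exact (hc4.add (continuous_const.mul hc2)).sub (continuous_const.mul hc0)
    have hLIcc : EqOn (L4 κ l1 l2 y) (fun _ => 0) (Icc (0:ℝ) 1) := by
      have := hLIoo.closure hLcont continuous_const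
      rwa [closure_Ioo (by norm_num : (0:ℝ) ≠ 1)] at this
    refine ⟨fun t ht => hLIcc ht, ?_, ?_⟩
    · exact hBC1.mpr (hFicc 1 (by norm_num))
    · exact hBC2.mpr (hGIcc (by norm_num : (1:ℝ) ∈ Icc (0:ℝ) 1))
  · -- backward
    rintro ⟨hL4, hb1, hb2⟩
    have hG1z : G 1 = 0 := hBC2.mp hb2
    have hF1z : F 1 = 0 := hBC1.mp hb1
    -- G constant on [0,1]
    have hGconst : ∀ t ∈ Icc (0:ℝ) 1, G t = G 0 := by
      apply constant_of_has_deriv_right_zero hGcont.continuousOn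
      intro x hx
      have : L4 κ l1 l2 y x = 0 := hL4 x (Ico_subset_Icc_self hx)
      have h := (hGL x).hasDerivWithinAt (s := Ici x)
      rwa [this] at h
    have hGzero : ∀ t ∈ Icc (0:ℝ) 1, G t = 0 := by
      intro t ht
      rw [hGconst t ht, ← hGconst 1 (by norm_num), hG1z]
    have hFconst : ∀ t ∈ Icc (0:ℝ) 1, F t = F 0 := by
      apply constant_of_has_deriv_right_zero hFcont.continuousOn
      intro x hx
      have h := (hFG x).hasDerivWithinAt (s := Ici x)
      rwa [hGzero x (Ico_subset_Icc_self hx)] at h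
    intro t ht
    show F t = 0
    rw [hFconst t ht, ← hFconst 1 (by norm_num), hF1z]
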